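/- Chaotic strongly continuous semigroups exist only on infinite-dimensional Banach spaces: if B is a complex Banach space with 0 < dim B < ∞, then no strongly continuous semigroup on B is chaotic. -/

import Mathlib

open Filter Set ENNReal

section Aux

variable {B : Type*} [NormedAddCommGroup B] [NormedSpace ℂ B]
    [Nontrivial B] [FiniteDimensional ℂ B]

omit [FiniteDimensional ℂ B] in
lemma dense_exists_norm_gt {s : Set B} (hs : Dense s) (M : ℝ) : ∃ y ∈ s, M < ‖y‖ := by
  obtain ⟨x, hx⟩ := exists_ne (0 : B)
  set K : ℝ := max M 0 + 2 with hK
  have hxn : (0:ℝ) < ‖x‖ := norm_pos_iff.mpr hx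
  set z : B := (K / ‖x‖ : ℝ) • x with hz
  have hzn : ‖z‖ = K := by
    rw [hz, norm_smul]
    simp only [Real.norm_eq_abs]
    rw [abs_of_pos (by positivity), div_mul_cancel₀ _ hxn.ne']
  obtain ⟨y, hy, hdy⟩ := Metric.mem_closure_iff.mp (hs z) 1 one_pos
  refine ⟨y, hy, ?_⟩
  have h1 : ‖z‖ - ‖z - y‖ ≤ ‖y‖ := by linarith [norm_sub_norm_le z y]
  have hd : ‖z - y‖ < 1 := by rwa [dist_eq_norm] at hdy
  have h2 : max M 0 + 1 ≤ ‖y‖ := by rw [hzn] at h1; rw [hK] at h1; linarith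
  calc M ≤ max M 0 := le_max_left _ _
    _ < ‖y‖ := by linarith

/-- From a spectrum element of a CLM on a finite-dimensional complex space, produce a
nonzero continuous functional which is an eigenvector of the transpose. -/
lemma exists_dual_eigen (S : B →L[ℂ] B) {μ : ℂ} (hμ : μ ∈ spectrum ℂ S) :
    ∃ φ : B →L[ℂ] ℂ, φ ≠ 0 ∧ ∀ x, φ (S x) = μ * φ x := by
  set L : B →ₗ[ℂ] B := μ • LinearMap.id - (S : B →ₗ[ℂ] B) with hL
  have hLx : ∀ x, L x = μ • x - S x := fun x => rfl
  have hnotsurj : ¬ Function.Surjective L := by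
    intro hsurj
    have hinj : Function.Injective L := (LinearMap.injective_iff_surjective).mpr hsurj
    set e := LinearEquiv.ofBijective L ⟨hinj, hsurj⟩ with he
    have : IsUnit (algebraMap ℂ (B →L[ℂ] B) μ - S) := by
      refine ⟨e.toContinuousLinearEquiv.toUnit, ?_⟩
      ext x
      show e.toContinuousLinearEquiv x = _
      have : (e.toContinuousLinearEquiv : B → B) x = e x := by
        rw [LinearEquiv.coe_toContinuousLinearEquiv']
      rw [this]
      show L x = _
      rw [hLx]
      simp [Algebra.algebraMap_eq_smul_one]
    exact (spectrum.mem_iff.mp hμ) this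
  have hlt : LinearMap.range L < ⊤ := by
    rcases lt_or_eq_of_le (le_top : LinearMap.range L ≤ ⊤) with h | h
    · exact h
    · exact absurd (LinearMap.range_eq_top.mp h) hnotsurj
  obtain ⟨φ₀, hφ₀, hmap⟩ := (LinearMap.range L).exists_dual_map_eq_bot_of_lt_top hlt inferInstance
  refine ⟨LinearMap.toContinuousLinearMap φ₀, ?_, ?_⟩
  · intro h
    apply hφ₀
    have := congrArg (fun (ψ : B →L[ℂ] ℂ) => (ψ : B →ₗ[ℂ] ℂ)) h
    simpa using this
  · intro x
    have hx : φ₀ (L x) = 0 := by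
      have : φ₀ (L x) ∈ (LinearMap.range L).map φ₀ :=
        Submodule.mem_map_of_mem (LinearMap.mem_range_self L x)
      rw [hmap] at this
      simpa using this
    rw [hLx] at hx
    simp only [map_sub, map_smul, smul_eq_mul] at hx
    have h1 : (LinearMap.toContinuousLinearMap φ₀) (S x) = φ₀ (S x) := rfl
    have h2 : (LinearMap.toContinuousLinearMap φ₀) x = φ₀ x := rfl
    rw [h1, h2]
    linear_combination -hx

lemma exists_pow_norm_lt_one (R : B →L[ℂ] B)
    (h : ∀ ν ∈ spectrum ℂ R, ‖ν‖ < 1) : ∃ m : ℕ, 1 ≤ m ∧ ‖R ^ m‖ < 1 := by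
  haveI : CompleteSpace B := FiniteDimensional.complete ℂ B
  have hnt : Nontrivial (B →L[ℂ] B) := by
    obtain ⟨x, hx⟩ := exists_ne (0 : B)
    refine ⟨1, 0, fun hcontra => hx ?_⟩
    have := congrArg (fun (f : B →L[ℂ] B) => f x) hcontra
    simpa using this
  have hrad : spectralRadius ℂ R < 1 := by
    have := spectrum.spectralRadius_lt_of_forall_lt (r := 1) R
      (fun z hz => by exact_mod_cast h z hz)
    simpa using this
  have hGel := spectrum.pow_nnnorm_pow_one_div_tendsto_nhds_spectralRadius R
  have hev : ∀ᶠ n : ℕ in atTop, (‖R ^ n‖₊ : ℝ≥0∞) ^ (1 / (n:ℝ)) < 1 :=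
    hGel.eventually_lt_const hrad
  obtain ⟨m, hm1, hmlt⟩ := ((eventually_ge_atTop 1).and hev).exists
  refine ⟨m, hm1, ?_⟩
  by_contra hge
  push_neg at hge
  have h1 : (1 : ℝ≥0∞) ≤ (‖R ^ m‖₊ : ℝ≥0∞) := by
    rw [one_le_coe_iff]
    exact_mod_cast hge
  have : (1 : ℝ≥0∞) ≤ (‖R ^ m‖₊ : ℝ≥0∞) ^ (1 / (m:ℝ)) := by
    calc (1:ℝ≥0∞) = 1 ^ (1/(m:ℝ)) := (ENNReal.one_rpow _).symm
      _ ≤ _ := ENNReal.rpow_le_rpow h1 (by positivity)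
  exact absurd hmlt (not_lt.mpr this)

lemma pow_norm_bounded (u : (B →L[ℂ] B)ˣ) (m : ℕ) (hm : 1 ≤ m)
    (hsm : ‖((↑u⁻¹ : B →L[ℂ] B)) ^ m‖ < 1) :
    ∃ C : ℝ, 1 ≤ C ∧ ∀ n : ℕ, ‖((↑u⁻¹ : B →L[ℂ] B)) ^ n‖ ≤ C := by
  set R : B →L[ℂ] B := (↑u⁻¹ : B →L[ℂ] B) with hR
  set M1 : ℝ := max 1 ‖R‖ with hM1
  have hM11 : (1:ℝ) ≤ M1 := le_max_left _ _
  have hRM : ‖R‖ ≤ M1 := le_max_right _ _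
  have hs : ∀ s : ℕ, ‖R ^ s‖ ≤ M1 ^ s := by
    intro s
    induction s with
    | zero => simp
    | succ k ih =>
      calc ‖R ^ (k+1)‖ = ‖R ^ k * R‖ := by rw [pow_succ]
        _ ≤ ‖R ^ k‖ * ‖R‖ := norm_mul_le _ _
        _ ≤ M1 ^ k * M1 := by
            apply mul_le_mul ih hRM (norm_nonneg _) (by positivity)
        _ = M1 ^ (k+1) := by rw [pow_succ]
  refine ⟨M1 ^ m, one_le_pow₀ hM11, ?_⟩
  intro n
  have hdecomp : n = m * (n / m) + n % m := (Nat.div_add_mod n m).symm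
  have hlt : n % m < m := Nat.mod_lt _ (by omega)
  calc ‖R ^ n‖ = ‖(R ^ m) ^ (n / m) * R ^ (n % m)‖ := by
        rw [← pow_mul, ← pow_add, ← hdecomp]
    _ ≤ ‖(R ^ m) ^ (n / m)‖ * ‖R ^ (n % m)‖ := norm_mul_le _ _
    _ ≤ ‖R ^ m‖ ^ (n / m) * M1 ^ (n % m) := by
        apply mul_le_mul (norm_pow_le _ _) (hs _) (norm_nonneg _) (by positivity)
    _ ≤ 1 * M1 ^ m := by
        apply mul_le_mul
        · exact pow_le_one₀ (norm_nonneg _) hsm.le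
        · exact pow_le_pow_right₀ hM11 hlt.le
        · positivity
        · norm_num
    _ = M1 ^ m := one_mul _

end Aux

/-- Chaotic strongly continuous semigroups exist only on infinite-dimensional Banach
spaces: on a non-zero finite-dimensional complex Banach space no strongly continuous
semigroup is chaotic. -/
theorem no_chaotic_semigroup_on_finite_dimensional
    {B : Type*} [NormedAddCommGroup B] [NormedSpace ℂ B]
    [Nontrivial B] [FiniteDimensional ℂ B]
    (T : ℝ → B →L[ℂ] B)
    (hT0 : T 0 = 1)
    (hTadd : ∀ s t : ℝ, 0 ≤ s → 0 ≤ t → T (s + t) = (T s).comp (T t))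
    (hTcont : ∀ f : B, ContinuousOn (fun t => T t f) (Set.Ici (0 : ℝ))) :
    ¬ ((∃ f : B, Dense {y : B | ∃ t : ℝ, 0 ≤ t ∧ T t f = y}) ∧
        Dense {f : B | ∃ t : ℝ, 0 < t ∧ T t f = f}) := by
  haveI : CompleteSpace B := FiniteDimensional.complete ℂ B
  rintro ⟨⟨f, hf⟩, -⟩
  by_cases hne : ∀ t : ℝ, 0 ≤ t → T t f ≠ 0
  swap
  · -- degenerate case: the orbit hits 0 and is therefore bounded.
    push_neg at hne
    obtain ⟨r, hr0, hrz⟩ := hne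
    obtain ⟨s0, hs0mem, hs0max⟩ := (isCompact_Icc (a := (0:ℝ)) (b := r)).exists_isMaxOn
      ⟨0, by constructor <;> simp [hr0]⟩
      (((hTcont f).mono (Icc_subset_Ici_self)).norm)
    set M0 : ℝ := ‖T s0 f‖ with hM0
    obtain ⟨y, hy, hygt⟩ := dense_exists_norm_gt hf M0
    obtain ⟨t, ht, rfl⟩ := hy
    have hbound : ‖T t f‖ ≤ M0 := by
      rcases le_or_gt t r with h | h
      · exact hs0max ⟨ht, h⟩
      · have : T t f = 0 := by
          have heq : T ((t - r) + r) = (T (t - r)).comp (T r) :=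
            hTadd (t - r) r (by linarith) hr0
          rw [sub_add_cancel] at heq
          rw [heq]
          simp [hrz]
        rw [this, norm_zero]
        exact le_trans (norm_nonneg ((T 0) f)) (hs0max ⟨le_rfl, hr0⟩)
    exact absurd hbound (not_le.mpr hygt)
  · set S : B →L[ℂ] B := T 1 with hS
    have hpow : ∀ (m : ℕ) (r : ℝ), 0 ≤ r → T (r + m) = (S ^ m).comp (T r) := by
      intro m
      induction m with
      | zero =>
        intro r hr
        simp only [Nat.cast_zero, add_zero, pow_zero]
        ext x
        rfl
      | succ k ih =>
        intro r hr
        have h1 : T (1 + (r + k)) = (T 1).comp (T (r + k)) :=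
          hTadd 1 (r + k) zero_le_one (by positivity)
        have harg : (1 : ℝ) + (r + k) = r + (k + 1 : ℕ) := by push_cast; ring
        rw [harg] at h1
        rw [h1, ih r hr, pow_succ']
        ext x
        simp
        rfl
    by_cases hsmall : ∃ μ ∈ spectrum ℂ S, ‖μ‖ ≤ 1
    · -- a small spectrum point: the orbit has bounded image under an eigen-functional.
      obtain ⟨μ, hμ, hμ1⟩ := hsmall
      obtain ⟨φ, hφne, hφS⟩ := exists_dual_eigen S hμ
      have hφpow : ∀ (m : ℕ) (x : B), φ ((S ^ m) x) = μ ^ m * φ x := by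
        intro m
        induction m with
        | zero => intro x; simp
        | succ k ih =>
          intro x
          have : (S ^ (k+1)) x = (S ^ k) (S x) := by
            rw [pow_succ]
            exact ContinuousLinearMap.mul_apply _ _ _
          rw [this, ih (S x), hφS x, pow_succ]
          ring
      obtain ⟨s0, hs0mem, hs0max⟩ := (isCompact_Icc (a := (0:ℝ)) (b := 1)).exists_isMaxOn
        ⟨0, by norm_num⟩
        ((φ.continuous.comp_continuousOn ((hTcont f).mono Icc_subset_Ici_self)).norm)
      set M : ℝ := ‖φ (T s0 f)‖ with hM
      have hMnonneg : 0 ≤ M := norm_nonneg _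
      have hbound : ∀ t : ℝ, 0 ≤ t → ‖φ (T t f)‖ ≤ M := by
        intro t ht
        set m : ℕ := ⌊t⌋₊ with hm
        have hr0 : 0 ≤ t - m := sub_nonneg.mpr (Nat.floor_le ht)
        have hr1 : t - m ≤ 1 := by
          have := Nat.lt_floor_add_one t
          rw [← hm] at this
          linarith
        have heq : T t = (S ^ m).comp (T (t - m)) := by
          have := hpow m (t - m) hr0
          rwa [sub_add_cancel] at this
        rw [heq]
        have : φ ((S ^ m) (T (t - m) f)) = μ ^ m * φ (T (t - m) f) := hφpow m _
        simp only [ContinuousLinearMap.coe_comp', Function.comp_apply]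
        rw [this, norm_mul, norm_pow]
        calc ‖μ‖ ^ m * ‖φ (T (t - m) f)‖ ≤ 1 * M := by
              apply mul_le_mul (pow_le_one₀ (norm_nonneg _) hμ1)
                (hs0max ⟨hr0, hr1⟩) (norm_nonneg _) zero_le_one
          _ = M := one_mul _
      obtain ⟨v, hv⟩ := DFunLike.ne_iff.mp hφne
      simp only [ContinuousLinearMap.zero_apply] at hv
      set x0 : B := (((M : ℂ) + 2) / φ v) • v with hx0
      have hφx0 : φ x0 = (M : ℂ) + 2 := by
        rw [hx0, map_smul, smul_eq_mul, div_mul_cancel₀ _ hv]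
      have hεpos : (0:ℝ) < 1 / (‖φ‖ + 1) := by positivity
      obtain ⟨y, hy, hdy⟩ := Metric.mem_closure_iff.mp (hf x0) _ hεpos
      obtain ⟨t, ht, rfl⟩ := hy
      have hdiff : ‖φ x0 - φ (T t f)‖ < 1 := by
        rw [← map_sub]
        calc ‖φ (x0 - T t f)‖ ≤ ‖φ‖ * ‖x0 - T t f‖ := φ.le_opNorm _
          _ ≤ ‖φ‖ * (1 / (‖φ‖ + 1)) := by
              apply mul_le_mul_of_nonneg_left _ (norm_nonneg φ)
              rw [← dist_eq_norm]
              exact hdy.le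
          _ < 1 := by
              have h1 : (0:ℝ) < ‖φ‖ + 1 := by positivity
              rw [mul_one_div, div_lt_one h1]
              linarith
      have hφx0norm : ‖φ x0‖ = M + 2 := by
        rw [hφx0]
        have : ((M : ℂ) + 2) = ((M + 2 : ℝ) : ℂ) := by push_cast; ring
        rw [this, Complex.norm_real, Real.norm_eq_abs, abs_of_nonneg (by linarith)]
      have : M + 2 - ‖φ (T t f)‖ < 1 := by
        calc M + 2 - ‖φ (T t f)‖ = ‖φ x0‖ - ‖φ (T t f)‖ := by rw [hφx0norm]
          _ ≤ ‖φ x0 - φ (T t f)‖ := norm_sub_norm_le _ _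
          _ < 1 := hdiff
      have := hbound t ht
      linarith
    · -- all spectrum points are large: the semigroup is eventually expanding.
      push_neg at hsmall
      have hUnit : IsUnit S := by
        by_contra h
        have h0 : (0:ℂ) ∈ spectrum ℂ S := spectrum.zero_mem (R := ℂ) h
        have := hsmall 0 h0
        rw [norm_zero] at this
        linarith
      set u : (B →L[ℂ] B)ˣ := hUnit.unit with hu
      have huS : (↑u : B →L[ℂ] B) = S := IsUnit.unit_spec hUnit
      set R : B →L[ℂ] B := (↑u⁻¹ : B →L[ℂ] B) with hR
      have hspecR : ∀ ν ∈ spectrum ℂ R, ‖ν‖ < 1 := by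
        intro ν hν
        have hνne : ν ≠ 0 := spectrum.ne_zero_of_mem_of_unit hν
        set rr : ℂˣ := Units.mk0 ν hνne with hrr
        have hiff := spectrum.inv_mem_iff (r := rr) (a := u⁻¹)
        have hmem : (↑rr⁻¹ : ℂ) ∈ spectrum ℂ (↑u⁻¹⁻¹ : B →L[ℂ] B) := hiff.mp hν
        rw [inv_inv] at hmem
        rw [huS] at hmem
        have hval : (↑rr⁻¹ : ℂ) = ν⁻¹ := rfl
        rw [hval] at hmem
        have := hsmall ν⁻¹ hmem
        rw [norm_inv] at this
        have hνpos : 0 < ‖ν‖ := norm_pos_iff.mpr hνne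
        rw [lt_inv_comm₀ one_pos hνpos] at this
        simpa using this
      obtain ⟨m, hm1, hsm⟩ := exists_pow_norm_lt_one R hspecR
      obtain ⟨C, hC1, hC⟩ := pow_norm_bounded u m hm1 (by rw [← hR]; exact hsm)
      obtain ⟨r0, hr0mem, hr0min⟩ := (isCompact_Icc (a := (0:ℝ)) (b := 1)).exists_isMinOn
        ⟨0, by norm_num⟩
        (((hTcont f).mono Icc_subset_Ici_self).norm)
      set ε : ℝ := ‖T r0 f‖ with hε
      have hεpos : 0 < ε := norm_pos_iff.mpr (hne r0 hr0mem.1)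
      have hlow : ∀ t : ℝ, 0 ≤ t → ε / C ≤ ‖T t f‖ := by
        intro t ht
        set m' : ℕ := ⌊t⌋₊ with hm'
        have hr0' : 0 ≤ t - m' := sub_nonneg.mpr (Nat.floor_le ht)
        have hr1' : t - m' ≤ 1 := by
          have := Nat.lt_floor_add_one t
          rw [← hm'] at this
          linarith
        have heq : T t = (S ^ m').comp (T (t - m')) := by
          have := hpow m' (t - m') hr0'
          rwa [sub_add_cancel] at this
        set w : (B →L[ℂ] B)ˣ := u ^ m' with hw
        have hwval : (↑w : B →L[ℂ] B) = S ^ m' := by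
          rw [hw, Units.val_pow_eq_pow_val, huS]
        have hrec : T (t - m') f = (↑w⁻¹ : B →L[ℂ] B) (T t f) := by
          rw [heq]
          simp only [ContinuousLinearMap.coe_comp', Function.comp_apply]
          rw [← hwval]
          have : (↑w⁻¹ : B →L[ℂ] B) ((↑w : B →L[ℂ] B) (T (t - m') f))
              = ((↑w⁻¹ * ↑w : B →L[ℂ] B)) (T (t - m') f) := rfl
          rw [this]
          rw [← Units.val_mul, inv_mul_cancel]
          simp
        have hwinv : (↑w⁻¹ : B →L[ℂ] B) = R ^ m' := by
          rw [hw, ← inv_pow, Units.val_pow_eq_pow_val, hR]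
        have hnormbound : ‖T (t - m') f‖ ≤ C * ‖T t f‖ := by
          rw [hrec, hwinv]
          calc ‖(R ^ m') (T t f)‖ ≤ ‖R ^ m'‖ * ‖T t f‖ := (R ^ m').le_opNorm _
            _ ≤ C * ‖T t f‖ := by
                apply mul_le_mul_of_nonneg_right (hC m') (norm_nonneg _)
        have hεle : ε ≤ ‖T (t - m') f‖ := hr0min ⟨hr0', hr1'⟩
        rw [div_le_iff₀ (by linarith : (0:ℝ) < C)]
        calc ε ≤ C * ‖T t f‖ := le_trans hεle hnormbound
          _ = ‖T t f‖ * C := mul_comm _ _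
      obtain ⟨y, hy, hdy⟩ := Metric.mem_closure_iff.mp (hf 0) (ε / C) (by positivity)
      obtain ⟨t, ht, rfl⟩ := hy
      have : ‖T t f‖ < ε / C := by
        rw [dist_eq_norm, zero_sub, norm_neg] at hdy
        exact hdy
      exact absurd (hlow t ht) (not_le.mpr this)
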